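/- Suppose γ : ℝ → ℂ is measurable with |γ(σ)| ≤ F·(1+σ²)^{K/2} for σ ≥ 0 and γ = 0 for σ < 0, where F > 0 and K ≥ 0. Then there exist R > 0 and Σ_0 > 0 such that for all Σ > Σ_0 and all t ∈ ℂ with Re t > 0, |∫_Σ^∞ γ(σ) e^{-σt} dσ| ≤ R·F·(Re t)^{-(K+1)}·e^{-Σ·Re t}·(1 + (Σ·Re t)²)^{K/2}. -/

import Mathlib

open MeasureTheory

open Set

private lemma rpow_add_le' {K : ℝ} (hK : 0 ≤ K) {a b : ℝ} (ha : 0 ≤ a) (hb : 0 ≤ b) :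
    (a + b) ^ K ≤ 2 ^ K * (a ^ K + b ^ K) := by
  have h1 : a + b ≤ 2 * max a b := by
    rcases le_total a b with h | h
    · rw [max_eq_right h]; linarith
    · rw [max_eq_left h]; linarith
  have h2 : (a + b) ^ K ≤ (2 * max a b) ^ K :=
    Real.rpow_le_rpow (by positivity) h1 hK
  have h3 : (2 * max a b) ^ K = 2 ^ K * (max a b) ^ K :=
    Real.mul_rpow (by norm_num) (le_max_of_le_left ha)
  have h4 : (max a b) ^ K ≤ a ^ K + b ^ K := by
    rcases le_total a b with h | h
    · rw [max_eq_right h]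
      exact le_add_of_nonneg_left (Real.rpow_nonneg ha K)
    · rw [max_eq_left h]
      exact le_add_of_nonneg_right (Real.rpow_nonneg hb K)
  calc (a + b) ^ K ≤ 2 ^ K * (max a b) ^ K := by rw [← h3]; exact h2
    _ ≤ 2 ^ K * (a ^ K + b ^ K) := by
        have : (0:ℝ) ≤ 2 ^ K := Real.rpow_nonneg (by norm_num) K
        nlinarith

private lemma integral_Ioi_shift (f : ℝ → ℝ) (S : ℝ) :
    ∫ σ in Ioi S, f σ = ∫ u in Ioi (0:ℝ), f (u + S) := by
  have h := (measurePreserving_add_right volume S).setIntegral_image_emb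
    (MeasurableEquiv.addRight S).measurableEmbedding f (Ioi 0)
  rw [show Ioi S = (fun x : ℝ => x + S) '' Ioi 0 by rw [Set.image_add_const_Ioi, zero_add]]
  exact h

private lemma integrableOn_Ioi_shift {f : ℝ → ℝ} {S : ℝ}
    (h : IntegrableOn (fun u => f (u + S)) (Ioi (0:ℝ))) :
    IntegrableOn f (Ioi S) := by
  have hmp : MeasurePreserving (fun u : ℝ => u + S)
      (volume.restrict (Ioi (0:ℝ))) (volume.restrict (Ioi S)) := by
    have := (measurePreserving_add_right volume S).restrict_preimage
      (measurableSet_Ioi (a := S))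
    rwa [Set.preimage_add_const_Ioi, sub_self] at this
  exact (hmp.integrable_comp_emb
    (MeasurableEquiv.addRight S).measurableEmbedding).1 h

private lemma integrableOn_rpow_exp {K x : ℝ} (hK : 0 ≤ K) (hx : 0 < x) :
    IntegrableOn (fun u : ℝ => u ^ K * Real.exp (-(x * u))) (Ioi (0:ℝ)) := by
  have h0 : IntegrableOn (fun w : ℝ => Real.exp (-w) * w ^ K) (Ioi (0:ℝ)) := by
    have := Real.GammaIntegral_convergent (s := K + 1) (by linarith)
    simpa using this
  have h1 : IntegrableOn (fun u : ℝ => Real.exp (-(x * u)) * (x * u) ^ K) (Ioi (0:ℝ)) := by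
    have := (integrableOn_Ioi_comp_mul_left_iff
      (fun w : ℝ => Real.exp (-w) * w ^ K) 0 hx).2 (by simpa using h0)
    simpa using this
  have h2 : IntegrableOn (fun u : ℝ => x ^ (-K) * (Real.exp (-(x * u)) * (x * u) ^ K))
      (Ioi (0:ℝ)) := h1.const_mul (x ^ (-K))
  refine h2.congr_fun (fun u hu => ?_) measurableSet_Ioi
  have hu0 : (0:ℝ) ≤ u := le_of_lt hu
  dsimp only
  rw [Real.mul_rpow hx.le hu0,
    show x ^ (-K) * (Real.exp (-(x * u)) * (x ^ K * u ^ K))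
      = (x ^ (-K) * x ^ K) * (u ^ K * Real.exp (-(x * u))) from by ring,
    ← Real.rpow_add hx]
  simp

private lemma integral_rpow_exp {K x : ℝ} (hK : 0 ≤ K) (hx : 0 < x) :
    ∫ u in Ioi (0:ℝ), u ^ K * Real.exp (-(x * u))
      = Real.Gamma (K + 1) * x ^ (-(K + 1)) := by
  have hG : Real.Gamma (K + 1) = ∫ w in Ioi (0:ℝ), Real.exp (-w) * w ^ K := by
    rw [Real.Gamma_eq_integral (by linarith : (0:ℝ) < K + 1)]
    simp
  have h1 := MeasureTheory.integral_comp_mul_left_Ioi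
    (fun w : ℝ => Real.exp (-w) * w ^ K) 0 hx
  have h2 : (∫ u in Ioi (0:ℝ), Real.exp (-(x * u)) * (x * u) ^ K)
      = x ^ K * ∫ u in Ioi (0:ℝ), u ^ K * Real.exp (-(x * u)) := by
    rw [← integral_const_mul]
    refine setIntegral_congr_fun measurableSet_Ioi (fun u hu => ?_)
    rw [Real.mul_rpow hx.le (le_of_lt hu)]
    ring
  rw [mul_zero, ← hG, smul_eq_mul] at h1
  rw [h2] at h1
  have hxK : x ^ K ≠ 0 := (Real.rpow_pos_of_pos hx K).ne'
  have hfin : Real.Gamma (K + 1) * x ^ (-(K + 1)) = x⁻¹ * Real.Gamma (K + 1) / x ^ K := by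
    rw [show -(K + 1) = (-K) + (-1) from by ring, Real.rpow_add hx, Real.rpow_neg_one,
      Real.rpow_neg hx.le]
    field_simp
  rw [hfin, ← h1]
  field_simp


/-- Quantitative tail estimate for the Laplace transform: there exist `R > 0`
and `Σ₀ > 0` such that for `Σ > Σ₀` and `Re t > 0`,
`|∫_Σ^∞ γ(σ)e^{-σt}dσ| ≤ R·F·(Re t)^{-(K+1)}·e^{-Σ Re t}·(1+(Σ Re t)²)^{K/2}`. -/
theorem laplace_tail_quantitative (K F : ℝ) (hK : 0 ≤ K) (hF : 0 < F)
    (γ : ℝ → ℂ) (hmeas : Measurable γ)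
    (hsupp : ∀ σ : ℝ, σ < 0 → γ σ = 0)
    (hbd : ∀ σ : ℝ, 0 ≤ σ → ‖γ σ‖ ≤ F * (1 + σ ^ 2) ^ (K / 2)) :
    ∃ R : ℝ, 0 < R ∧ ∃ S₀ : ℝ, 0 < S₀ ∧ ∀ S : ℝ, S₀ < S → ∀ t : ℂ, 0 < t.re →
      ‖∫ σ in Set.Ici S, γ σ * Complex.exp (-(σ : ℂ) * t)‖ ≤
        R * F * t.re ^ (-(K + 1)) * Real.exp (-S * t.re) *
          (1 + (S * t.re) ^ 2) ^ (K / 2) := by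
  have hΓ : 0 < Real.Gamma (K + 1) := Real.Gamma_pos_of_pos (by linarith)
  have h2K : (0:ℝ) < 2 ^ K := Real.rpow_pos_of_pos (by norm_num) K
  have h2K2 : (0:ℝ) < 2 ^ (K / 2) := Real.rpow_pos_of_pos (by norm_num) (K / 2)
  refine ⟨2 ^ (K / 2) * 2 ^ K * (1 + Real.Gamma (K + 1)), by positivity, 1, one_pos, ?_⟩
  intro S hS t ht
  set x := t.re with hxdef
  have hS0 : (0:ℝ) < S := lt_trans one_pos hS
  -- integrability
  have hIexp : IntegrableOn (fun σ : ℝ => Real.exp (-(x * σ))) (Set.Ioi S) := by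
    have h0 := (integrableOn_rpow_exp (le_refl (0:ℝ)) ht).mono_set
      (Set.Ioi_subset_Ioi hS0.le)
    refine h0.congr_fun (fun u _ => ?_) measurableSet_Ioi
    simp
  have hIpow : IntegrableOn (fun σ : ℝ => (σ - S) ^ K * Real.exp (-(x * σ))) (Set.Ioi S) := by
    apply integrableOn_Ioi_shift
    have h0 : IntegrableOn (fun u : ℝ => u ^ K * Real.exp (-(x * u)) * Real.exp (-(x * S)))
        (Set.Ioi (0:ℝ)) := (integrableOn_rpow_exp hK ht).mul_const (Real.exp (-(x * S)))
    refine h0.congr_fun (fun u _ => ?_) measurableSet_Ioi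
    simp only [add_sub_cancel_right]
    rw [show -(x * (u + S)) = -(x * u) + -(x * S) from by ring, Real.exp_add]
    ring
  set c := 2 ^ (K / 2) * 2 ^ K * F with hc
  have hcpos : 0 < c := by positivity
  set g : ℝ → ℝ := fun σ =>
    c * (S ^ K * Real.exp (-(x * σ)) + (σ - S) ^ K * Real.exp (-(x * σ))) with hg
  have hgint : IntegrableOn g (Set.Ioi S) :=
    ((hIexp.const_mul (S ^ K)).add hIpow).const_mul c
  -- pointwise bound
  have hpt : ∀ σ, σ ∈ Set.Ioi S → ‖γ σ * Complex.exp (-(σ : ℂ) * t)‖ ≤ g σ := by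
    intro σ hσ
    have hσS : S < σ := hσ
    have hσ1 : (1:ℝ) ≤ σ := le_of_lt (lt_trans hS hσS)
    have hσ0 : (0:ℝ) ≤ σ := by linarith
    have hexp : ‖Complex.exp (-(σ : ℂ) * t)‖ = Real.exp (-(x * σ)) := by
      rw [Complex.norm_exp]
      congr 1
      simp [Complex.mul_re]
      ring
    have e1 : ‖γ σ‖ ≤ F * (1 + σ ^ 2) ^ (K / 2) := hbd σ hσ0
    have e2 : (1 + σ ^ 2) ^ (K / 2) ≤ 2 ^ (K / 2) * σ ^ K := by
      have h12 : (1 + σ ^ 2) ≤ 2 * σ ^ 2 := by nlinarith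
      have h := Real.rpow_le_rpow (by positivity) h12 (by linarith : (0:ℝ) ≤ K / 2)
      rw [Real.mul_rpow (by norm_num) (by positivity)] at h
      have hsq : ((σ : ℝ) ^ 2) ^ (K / 2) = σ ^ K := by
        rw [← Real.rpow_natCast σ 2, ← Real.rpow_mul hσ0]
        congr 1
        push_cast
        ring
      rwa [hsq] at h
    have e3 : σ ^ K ≤ 2 ^ K * (S ^ K + (σ - S) ^ K) := by
      have h := rpow_add_le' hK hS0.le (by linarith : (0:ℝ) ≤ σ - S)
      rwa [show S + (σ - S) = σ from by ring] at h
    rw [norm_mul, hexp]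
    have hexpnn : (0:ℝ) ≤ Real.exp (-(x * σ)) := (Real.exp_pos _).le
    have hγnn : (0:ℝ) ≤ ‖γ σ‖ := norm_nonneg _
    calc ‖γ σ‖ * Real.exp (-(x * σ))
        ≤ (F * (1 + σ ^ 2) ^ (K / 2)) * Real.exp (-(x * σ)) := by gcongr
      _ ≤ (F * (2 ^ (K / 2) * σ ^ K)) * Real.exp (-(x * σ)) := by gcongr
      _ ≤ (F * (2 ^ (K / 2) * (2 ^ K * (S ^ K + (σ - S) ^ K)))) * Real.exp (-(x * σ)) := by
          gcongr
      _ = g σ := by simp only [hg, hc]; ring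
  have hae : ∀ᵐ σ ∂(volume.restrict (Set.Ioi S)),
      ‖γ σ * Complex.exp (-(σ : ℂ) * t)‖ ≤ g σ :=
    (ae_restrict_iff' measurableSet_Ioi).2 (ae_of_all _ hpt)
  -- integral values
  have hval1 : ∫ σ in Set.Ioi S, Real.exp (-(x * σ)) = x⁻¹ * Real.exp (-(x * S)) := by
    have h := MeasureTheory.integral_comp_mul_left_Ioi (fun w : ℝ => Real.exp (-w)) S ht
    rw [integral_exp_neg_Ioi] at h
    simpa [smul_eq_mul] using h
  have hval2 : ∫ σ in Set.Ioi S, (σ - S) ^ K * Real.exp (-(x * σ))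
      = Real.exp (-(x * S)) * (Real.Gamma (K + 1) * x ^ (-(K + 1))) := by
    rw [integral_Ioi_shift (fun σ => (σ - S) ^ K * Real.exp (-(x * σ))) S]
    rw [setIntegral_congr_fun (g := fun u : ℝ =>
        Real.exp (-(x * S)) * (u ^ K * Real.exp (-(x * u)))) measurableSet_Ioi
      (fun u _ => by
        simp only [add_sub_cancel_right]
        rw [show -(x * (u + S)) = -(x * u) + -(x * S) from by ring, Real.exp_add]
        ring)]
    rw [integral_const_mul, integral_rpow_exp hK ht]
  -- put it together
  rw [MeasureTheory.integral_Ici_eq_integral_Ioi]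
  refine le_trans (MeasureTheory.norm_integral_le_of_norm_le hgint hae) ?_
  have hgval : ∫ σ in Set.Ioi S, g σ
      = c * (S ^ K * (x⁻¹ * Real.exp (-(x * S)))
          + Real.exp (-(x * S)) * (Real.Gamma (K + 1) * x ^ (-(K + 1)))) := by
    simp only [hg]
    rw [integral_const_mul, integral_add (hIexp.const_mul (S ^ K)) hIpow,
      integral_const_mul, hval1, hval2]
  rw [hgval]
  -- final arithmetic
  set E := Real.exp (-(x * S)) with hE
  set X := x ^ (-(K + 1)) with hX
  set P := (1 + (S * x) ^ 2) ^ (K / 2) with hP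
  have hXpos : 0 < X := Real.rpow_pos_of_pos ht _
  have hEpos : 0 < E := Real.exp_pos _
  have hP1 : (1:ℝ) ≤ P := Real.one_le_rpow (by nlinarith) (by linarith)
  have hP2 : S ^ K * x ^ K ≤ P := by
    rw [← Real.mul_rpow hS0.le ht.le]
    calc (S * x) ^ K = ((S * x) ^ 2) ^ (K / 2) := by
          rw [← Real.rpow_natCast (S * x) 2, ← Real.rpow_mul (by positivity)]
          congr 1
          push_cast
          ring
      _ ≤ P := Real.rpow_le_rpow (by positivity) (by linarith [sq_nonneg (S * x)]) (by linarith)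
  have hxrel : x⁻¹ = x ^ K * X := by
    rw [hX, ← Real.rpow_add ht, show K + -(K + 1) = -1 from by ring, Real.rpow_neg_one]
  have hEtarget : Real.exp (-S * x) = E := by rw [hE]; congr 1; ring
  rw [hEtarget]
  calc c * (S ^ K * (x⁻¹ * E) + E * (Real.Gamma (K + 1) * X))
      = c * (S ^ K * x ^ K * (X * E) + Real.Gamma (K + 1) * (X * E)) := by
        rw [hxrel]; ring
    _ ≤ c * (P * (X * E) + Real.Gamma (K + 1) * (P * (X * E))) := by
        have hXE : (0:ℝ) ≤ X * E := by positivity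
        refine mul_le_mul_of_nonneg_left (add_le_add ?_ ?_) hcpos.le
        · exact mul_le_mul_of_nonneg_right hP2 hXE
        · exact mul_le_mul_of_nonneg_left (le_mul_of_one_le_left hXE hP1) hΓ.le
    _ = 2 ^ (K / 2) * 2 ^ K * (1 + Real.Gamma (K + 1)) * F * X * E * P := by
        rw [hc]; ring
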